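/- For every τ ∈ (0,1) and every s ≥ 0, τ·((1+s)^{(1−τ)/2} − 1) ≤ χ̃(s), where χ̃(s) = ∫₀^s √(ψ'(t)) dt. -/

import Mathlib

/-- The derivative ψ'(s) = 1/((1+ln(1+|s|))²(1+|s|)). -/
noncomputable def psi' (s : ℝ) : ℝ :=
  1 / ((1 + Real.log (1 + |s|)) ^ 2 * (1 + |s|))

/-- χ̃(s) = ∫₀^s √(ψ'(t)) dt. -/
noncomputable def chit (s : ℝ) : ℝ :=
  ∫ t in (0:ℝ)..s, Real.sqrt (psi' t)

lemma psi'_cont : Continuous fun t : ℝ => Real.sqrt (psi' t) := by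
  apply Real.continuous_sqrt.comp
  unfold psi'
  apply Continuous.div continuous_const
  · apply Continuous.mul _ (by continuity)
    apply Continuous.pow
    apply Continuous.add continuous_const
    exact Real.continuousOn_log.comp_continuous (by continuity)
      (fun x => Set.mem_compl_singleton_iff.mpr (by positivity))
  · intro x
    have h1 : (0:ℝ) ≤ Real.log (1 + |x|) :=
      Real.log_nonneg (by simp [abs_nonneg])
    positivity

theorem stmt_9 (τ : ℝ) (hτ : τ ∈ Set.Ioo (0 : ℝ) 1) (s : ℝ) (hs : 0 ≤ s) :
    τ * ((1 + s) ^ ((1 - τ) / 2) - 1) ≤ chit s := by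
  obtain ⟨hτ0, hτ1⟩ := hτ
  set a : ℝ := (1 - τ) / 2 with ha
  have ha0 : 0 < a := by simp only [ha]; linarith
  have ha1 : a < 1 := by simp only [ha]; linarith
  -- pointwise bound
  have key : ∀ t ∈ Set.Icc (0:ℝ) s,
      τ / 2 * (1 + t) ^ (a - 1) ≤ Real.sqrt (psi' t) := by
    intro t ht
    have ht0 : 0 ≤ t := ht.1
    have h1t : (0:ℝ) < 1 + t := by linarith
    have hL0 : (0:ℝ) ≤ Real.log (1 + t) := Real.log_nonneg (by linarith)
    have hL : (0:ℝ) < 1 + Real.log (1 + t) := by linarith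
    have hsq : Real.sqrt (psi' t)
        = ((1 + Real.log (1 + t)) * Real.sqrt (1 + t))⁻¹ := by
      rw [psi', abs_of_nonneg ht0, one_div, Real.sqrt_inv,
        Real.sqrt_mul (sq_nonneg _), Real.sqrt_sq hL.le]
    rw [hsq]
    -- (1+t)^(a-1) = ((1+t)^(1-a))⁻¹
    have hrw : (1 + t) ^ (a - 1) = ((1 + t) ^ (1 - a))⁻¹ := by
      rw [← Real.rpow_neg h1t.le]; ring_nf
    have hX : (1 + t) ^ (1 - a) = (1 + t) ^ (τ / 2) * Real.sqrt (1 + t) := by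
      rw [Real.sqrt_eq_rpow, ← Real.rpow_add h1t]
      congr 1; simp only [ha]; ring
    have h := Real.log_le_sub_one_of_pos (Real.rpow_pos_of_pos h1t (τ / 2))
    rw [Real.log_rpow h1t] at h
    have hkey2 : τ * (1 + Real.log (1 + t)) ≤ 2 * (1 + t) ^ (τ / 2) := by
      nlinarith
    have hst : (0:ℝ) < Real.sqrt (1 + t) := Real.sqrt_pos.mpr h1t
    have hP : (0:ℝ) < (1 + t) ^ (τ / 2) := Real.rpow_pos_of_pos h1t _
    rw [hrw, hX, ← one_div, ← one_div, mul_one_div,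
      div_le_div_iff₀ (mul_pos hP hst) (mul_pos hL hst)]
    nlinarith [mul_le_mul_of_nonneg_right hkey2 hst.le]
  -- derivative
  have hF : ∀ t ∈ Set.Icc (0:ℝ) s,
      HasDerivAt (fun u => τ / (1 - τ) * ((1 + u) ^ a - 1))
        (τ / 2 * (1 + t) ^ (a - 1)) t := by
    intro t ht
    have h1t : (0:ℝ) < 1 + t := by linarith [ht.1]
    have h1 : HasDerivAt (fun u : ℝ => (1 + u)) 1 t :=
      (hasDerivAt_id t).const_add 1
    have h2 : HasDerivAt (fun u : ℝ => (1 + u) ^ a)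
        (a * (1 + t) ^ (a - 1) * 1) t :=
      (Real.hasDerivAt_rpow_const (Or.inl h1t.ne')).comp t h1
    have h3 := ((h2.sub_const 1).const_mul (τ / (1 - τ)))
    convert h3 using 1
    · rfl
    · rfl
    have : (1:ℝ) - τ ≠ 0 := by linarith
    rw [ha, mul_one, ← mul_assoc]
    congr 1
    rw [div_mul_div_comm, mul_comm (1 - τ) 2, mul_div_mul_right _ _ this]
  -- integral computation
  have hcont : IntervalIntegrable (fun t => τ / 2 * (1 + t) ^ (a - 1))
      MeasureTheory.volume 0 s := by
    apply ContinuousOn.intervalIntegrable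
    apply ContinuousOn.mul continuousOn_const
    apply ContinuousOn.rpow_const (by fun_prop)
    intro t ht
    rw [Set.uIcc_of_le hs] at ht
    exact Or.inl (ne_of_gt (by linarith [ht.1]))
  have hint : (∫ t in (0:ℝ)..s, τ / 2 * (1 + t) ^ (a - 1))
      = τ / (1 - τ) * ((1 + s) ^ a - 1) := by
    rw [intervalIntegral.integral_eq_sub_of_hasDerivAt
      (fun t ht => hF t (by rwa [Set.uIcc_of_le hs] at ht)) hcont]
    simp
  have hmono : (∫ t in (0:ℝ)..s, τ / 2 * (1 + t) ^ (a - 1)) ≤ chit s :=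
    intervalIntegral.integral_mono_on hs hcont
      (psi'_cont.intervalIntegrable 0 s) key
  have hpow : (1:ℝ) ≤ (1 + s) ^ a :=
    Real.one_le_rpow (by linarith) ha0.le
  calc τ * ((1 + s) ^ a - 1) ≤ τ / (1 - τ) * ((1 + s) ^ a - 1) := by
        apply mul_le_mul_of_nonneg_right _ (by linarith)
        rw [le_div_iff₀ (by linarith)]
        nlinarith
    _ = ∫ t in (0:ℝ)..s, τ / 2 * (1 + t) ^ (a - 1) := hint.symm
    _ ≤ chit s := hmono
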